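/- Let D ≥ 2 be an integer and C ≥ 0 a real number. Let (N̄_j)_{j≥1} and (P̄_j)_{j≥1} be sequences of nonnegative reals satisfying N̄_j = Σ_{i | j} P̄_i for every j ≥ 1 and N̄_j ≤ C·D·(D−1)^{j−1} for every j ≥ 1. Then: (a) for every complex u with |u| < (D−1)^{−1} the series Σ_{j≥1} (N̄_j/j) u^j converges absolutely, and Z(u) := exp(Σ_{j≥1} (N̄_j/j) u^j) is holomorphic on the open disc {u ∈ ℂ : |u| < (D−1)^{−1}}; (b) for every such u the family (exp(−(P̄_j/j)·Log(1−u^j)))_{j≥1} is multipliable (the corresponding series Σ_{j≥1} (P̄_j/j)·Log(1−u^j) converges absolutely) and Z(u) = Π_{j≥1} exp(−(P̄_j/j)·Log(1−u^j)), where Log denotes the principal branch of the complex logarithm. -/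

import Mathlib

open Filter

private lemma summable_pow_pred {q : ℝ} (hq0 : 0 ≤ q) (hq1 : q < 1) :
    Summable (fun i : ℕ => q ^ (i - 1)) := by
  refine (summable_nat_add_iff 1).mp ?_
  simpa using summable_geometric_of_lt_one hq0 hq1

private lemma key_hasSum (D : ℕ) (hD : 2 ≤ D) (C : ℝ) (hC : 0 ≤ C)
    (N P : ℕ → ℝ)
    (hPnonneg : ∀ j, 1 ≤ j → 0 ≤ P j)
    (hNP : ∀ j, 1 ≤ j → N j = ∑ i ∈ j.divisors, P i)
    (hbound : ∀ j, 1 ≤ j → N j ≤ C * D * ((D : ℝ) - 1) ^ (j - 1))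
    (u : ℂ) (hu : ‖u‖ < ((D : ℝ) - 1)⁻¹) :
    HasSum (fun j : ℕ => ((N (j + 1) : ℂ) / ((j : ℂ) + 1)) * u ^ (j + 1))
      (∑' j : ℕ, ((N (j + 1) : ℂ) / ((j : ℂ) + 1)) * u ^ (j + 1)) ∧
    HasSum (fun j : ℕ => -(((P (j + 1) : ℂ)) / ((j : ℂ) + 1)) * Complex.log (1 - u ^ (j + 1)))
      (∑' j : ℕ, ((N (j + 1) : ℂ) / ((j : ℂ) + 1)) * u ^ (j + 1)) := by
  have hD2 : (2 : ℝ) ≤ (D : ℝ) := by exact_mod_cast hD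
  have hD1 : (1 : ℝ) ≤ (D : ℝ) - 1 := by linarith
  have hDpos : (0 : ℝ) < (D : ℝ) - 1 := by linarith
  have hr1 : ((D : ℝ) - 1)⁻¹ ≤ 1 := by
    rw [inv_le_one_iff₀]; right; exact hD1
  have hu1 : ‖u‖ < 1 := lt_of_lt_of_le hu hr1
  set q : ℝ := ((D : ℝ) - 1) * ‖u‖ with hq
  have hq0 : 0 ≤ q := by positivity
  have hq1 : q < 1 := by
    have := mul_lt_mul_of_pos_left hu hDpos
    rwa [mul_inv_cancel₀ hDpos.ne'] at this
  have hP_le : ∀ j, 1 ≤ j → P j ≤ C * D * ((D : ℝ) - 1) ^ (j - 1) := by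
    intro j hj
    refine le_trans ?_ (hbound j hj)
    rw [hNP j hj]
    exact Finset.single_le_sum (f := P)
      (fun i hi => hPnonneg i (Nat.pos_of_mem_divisors hi))
      (Nat.mem_divisors_self j (by omega))
  set F : ℕ × ℕ → ℂ :=
    fun p => (P p.1 : ℂ) * u ^ (p.1 * p.2) / ((p.1 * p.2 : ℕ) : ℂ) with hF
  have hF0 : ∀ p : ℕ × ℕ, p.1 * p.2 = 0 → F p = 0 := by
    intro p hp
    rw [show F p = (P p.1 : ℂ) * u ^ (p.1 * p.2) / ((p.1 * p.2 : ℕ) : ℂ) from rfl, hp]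
    simp
  -- norm bound
  have hFle : ∀ p : ℕ × ℕ, ‖F p‖ ≤ C * D * q ^ (p.1 - 1) * ‖u‖ ^ p.2 := by
    rintro ⟨i, k⟩
    rcases Nat.eq_zero_or_pos (i * k) with h0 | hpos
    · rw [hF0 _ h0, norm_zero]; positivity
    have hi : 1 ≤ i := by
      rcases Nat.eq_zero_or_pos i with rfl | h
      · simp at hpos
      · exact h
    have hk : 1 ≤ k := by
      rcases Nat.eq_zero_or_pos k with rfl | h
      · simp at hpos
      · exact h
    have hik : i - 1 + k ≤ i * k := by
      obtain ⟨a, rfl⟩ : ∃ a, i = a + 1 := ⟨i - 1, by omega⟩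
      obtain ⟨b, rfl⟩ : ∃ b, k = b + 1 := ⟨k - 1, by omega⟩
      have : (a + 1) * (b + 1) = a * b + a + b + 1 := by ring
      omega
    have hPi : 0 ≤ P i := hPnonneg i hi
    have hnorm : ‖F (i, k)‖ = P i * ‖u‖ ^ (i * k) / ((i * k : ℕ) : ℝ) := by
      simp only [hF, norm_div, norm_mul, norm_pow, Complex.norm_real, Complex.norm_natCast]
      rw [Real.norm_of_nonneg hPi]
    rw [hnorm]
    calc P i * ‖u‖ ^ (i * k) / ((i * k : ℕ) : ℝ)
        ≤ P i * ‖u‖ ^ (i * k) := by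
          apply div_le_self (by positivity)
          exact_mod_cast hpos
      _ ≤ (C * D * ((D : ℝ) - 1) ^ (i - 1)) * ‖u‖ ^ (i * k) :=
          mul_le_mul_of_nonneg_right (hP_le i hi) (by positivity)
      _ ≤ (C * D * ((D : ℝ) - 1) ^ (i - 1)) * ‖u‖ ^ (i - 1 + k) := by
          refine mul_le_mul_of_nonneg_left ?_ (by positivity)
          exact pow_le_pow_of_le_one (norm_nonneg u) hu1.le hik
      _ = C * D * q ^ (i - 1) * ‖u‖ ^ k := by
          rw [hq, pow_add, mul_pow]; ring
  have h1 : Summable (fun i : ℕ => C * D * q ^ (i - 1)) :=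
    (summable_pow_pred hq0 hq1).mul_left _
  have h2 : Summable (fun k : ℕ => ‖u‖ ^ k) :=
    summable_geometric_of_lt_one (norm_nonneg u) hu1
  have hB : Summable (fun p : ℕ × ℕ => (C * D * q ^ (p.1 - 1)) * ‖u‖ ^ p.2) :=
    h1.mul_of_nonneg h2 (fun i => by positivity) (fun k => by positivity)
  have hFnorm : Summable (fun p => ‖F p‖) :=
    Summable.of_nonneg_of_le (fun p => norm_nonneg _) hFle hB
  have hFsum : Summable F := hFnorm.of_norm
  -- fiberwise over products: the N-side
  set g : ℕ → ℂ := fun n => (N n : ℂ) * u ^ n / (n : ℂ) with hgdef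
  have hfib : HasSum (fun n => ∑' p : (fun p : ℕ × ℕ => p.1 * p.2) ⁻¹' {n}, F p)
      (∑' p, F p) := hFsum.hasSum.tsum_fiberwise _
  have hgfib : ∀ n, (∑' p : (fun p : ℕ × ℕ => p.1 * p.2) ⁻¹' {n}, F p) = g n := by
    intro n
    rcases n with _ | n
    · have hzero : ∀ p : (fun p : ℕ × ℕ => p.1 * p.2) ⁻¹' {(0 : ℕ)}, F p = 0 := by
        rintro ⟨p, hp⟩
        exact hF0 p hp
      rw [tsum_congr hzero, tsum_zero]
      simp [hgdef]
    · rw [show (fun p : ℕ × ℕ => p.1 * p.2) ⁻¹' {n + 1}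
          = ↑((n + 1).divisorsAntidiagonal) from by
            ext p; simp [Nat.mem_divisorsAntidiagonal]]
      rw [Finset.tsum_subtype' ((n + 1).divisorsAntidiagonal) F]
      have hcongr : ∀ p ∈ (n + 1).divisorsAntidiagonal,
          F p = (P p.1 : ℂ) * (u ^ (n + 1) / (((n + 1) : ℕ) : ℂ)) := by
        intro p hp
        have h1 : p.1 * p.2 = n + 1 := (Nat.mem_divisorsAntidiagonal.mp hp).1
        simp only [hF]
        rw [h1, mul_div_assoc]
      rw [Finset.sum_congr rfl hcongr, ← Finset.sum_mul]
      have h2 : (∑ p ∈ (n + 1).divisorsAntidiagonal, (P p.1 : ℂ))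
          = ∑ i ∈ (n + 1).divisors, (P i : ℂ) :=
        Nat.sum_divisorsAntidiagonal (fun i _ => (P i : ℂ))
      have h3 : (∑ i ∈ (n + 1).divisors, (P i : ℂ)) = (N (n + 1) : ℂ) := by
        rw [hNP (n + 1) (by omega)]
        push_cast
        ring
      rw [h2, h3]
      simp only [hgdef]
      rw [mul_div_assoc]
  have hgsum : HasSum g (∑' p, F p) := funext hgfib ▸ hfib
  have hNhas : HasSum (fun j : ℕ => ((N (j + 1) : ℂ) / ((j : ℂ) + 1)) * u ^ (j + 1))
      (∑' p, F p) := by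
    have h := (hasSum_nat_add_iff' (f := g) 1).mpr hgsum
    have h0 : g 0 = 0 := by simp [hgdef]
    rw [Finset.range_one, Finset.sum_singleton, h0, sub_zero] at h
    rw [show (fun j : ℕ => ((N (j + 1) : ℂ) / ((j : ℂ) + 1)) * u ^ (j + 1))
        = fun n : ℕ => g (n + 1) from funext fun j => by
          simp only [hgdef]; push_cast; ring]
    exact h
  -- fiberwise over first coordinate: the P-side
  set T : ℕ → ℂ := fun i => -((P i : ℂ) / (i : ℂ)) * Complex.log (1 - u ^ i) with hT
  have hinner : ∀ i : ℕ, HasSum (fun k => F (i, k)) (T i) := by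
    intro i
    rcases Nat.eq_zero_or_pos i with rfl | hi
    · have : (fun k : ℕ => F (0, k)) = fun _ => 0 := by
        funext k; exact hF0 (0, k) (by simp)
      rw [this, hT]
      simpa using hasSum_zero
    · have hz : ‖u ^ i‖ < 1 := by
        rw [norm_pow]
        exact pow_lt_one₀ (norm_nonneg u) hu1 (by omega)
      have hlog := (Complex.hasSum_taylorSeries_neg_log hz).mul_left ((P i : ℂ) / (i : ℂ))
      have heq : (fun k : ℕ => ((P i : ℂ) / (i : ℂ)) * ((u ^ i) ^ k / (k : ℂ)))
          = fun k : ℕ => F (i, k) := by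
        funext k
        simp only [hF, ← pow_mul]
        push_cast
        rw [div_mul_div_comm]
      rw [heq] at hlog
      have hTi : T i = (P i : ℂ) / (i : ℂ) * -Complex.log (1 - u ^ i) := by
        rw [hT]
        ring
      rw [hTi]
      exact hlog
  have hThas : HasSum T (∑' p, F p) := hFsum.hasSum.prod_fiberwise hinner
  have hPhas : HasSum
      (fun j : ℕ => -(((P (j + 1) : ℂ)) / ((j : ℂ) + 1)) * Complex.log (1 - u ^ (j + 1)))
      (∑' p, F p) := by
    have h := (hasSum_nat_add_iff' (f := T) 1).mpr hThas
    have h0 : T 0 = 0 := by simp [hT]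
    rw [Finset.range_one, Finset.sum_singleton, h0, sub_zero] at h
    rw [show (fun j : ℕ => -(((P (j + 1) : ℂ)) / ((j : ℂ) + 1)) * Complex.log (1 - u ^ (j + 1)))
        = fun n : ℕ => T (n + 1) from funext fun j => by
          simp only [hT]; push_cast; ring_nf]
    exact h
  have htsum : (∑' j : ℕ, ((N (j + 1) : ℂ) / ((j : ℂ) + 1)) * u ^ (j + 1)) = ∑' p, F p :=
    hNhas.tsum_eq
  rw [htsum]
  exact ⟨hNhas, hPhas⟩

theorem euler_product_scalar (D : ℕ) (hD : 2 ≤ D) (C : ℝ) (hC : 0 ≤ C)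
    (N P : ℕ → ℝ)
    (hNnonneg : ∀ j, 1 ≤ j → 0 ≤ N j) (hPnonneg : ∀ j, 1 ≤ j → 0 ≤ P j)
    (hNP : ∀ j, 1 ≤ j → N j = ∑ i ∈ j.divisors, P i)
    (hbound : ∀ j, 1 ≤ j → N j ≤ C * D * ((D : ℝ) - 1) ^ (j - 1)) :
    (∀ u : ℂ, ‖u‖ < ((D : ℝ) - 1)⁻¹ →
      Summable (fun j : ℕ => ‖((N (j + 1) : ℂ) / ((j : ℂ) + 1)) * u ^ (j + 1)‖)) ∧
    DifferentiableOn ℂ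
      (fun u : ℂ => Complex.exp (∑' j : ℕ, ((N (j + 1) : ℂ) / ((j : ℂ) + 1)) * u ^ (j + 1)))
      (Metric.ball 0 ((D : ℝ) - 1)⁻¹) ∧
    (∀ u : ℂ, ‖u‖ < ((D : ℝ) - 1)⁻¹ →
      Summable (fun j : ℕ =>
        ‖((P (j + 1) : ℂ) / ((j : ℂ) + 1)) * Complex.log (1 - u ^ (j + 1))‖) ∧
      Multipliable (fun j : ℕ =>
        Complex.exp (-(((P (j + 1) : ℂ)) / ((j : ℂ) + 1)) * Complex.log (1 - u ^ (j + 1)))) ∧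
      Complex.exp (∑' j : ℕ, ((N (j + 1) : ℂ) / ((j : ℂ) + 1)) * u ^ (j + 1)) =
        ∏' j : ℕ,
          Complex.exp (-(((P (j + 1) : ℂ)) / ((j : ℂ) + 1)) * Complex.log (1 - u ^ (j + 1)))) := by
  have hD2 : (2 : ℝ) ≤ (D : ℝ) := by exact_mod_cast hD
  have hD1 : (1 : ℝ) ≤ (D : ℝ) - 1 := by linarith
  have hDpos : (0 : ℝ) < (D : ℝ) - 1 := by linarith
  have hr1 : ((D : ℝ) - 1)⁻¹ ≤ 1 := by
    rw [inv_le_one_iff₀]; right; exact hD1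
  have hP_le : ∀ j, 1 ≤ j → P j ≤ C * D * ((D : ℝ) - 1) ^ (j - 1) := by
    intro j hj
    refine le_trans ?_ (hbound j hj)
    rw [hNP j hj]
    exact Finset.single_le_sum (f := P)
      (fun i hi => hPnonneg i (Nat.pos_of_mem_divisors hi))
      (Nat.mem_divisors_self j (by omega))
  have hCD : 0 ≤ C * (D : ℝ) := by positivity
  refine ⟨?_, ?_, ?_⟩
  · -- (a) summability
    intro u hu
    have hu1 : ‖u‖ < 1 := lt_of_lt_of_le hu hr1
    have hq1 : ((D : ℝ) - 1) * ‖u‖ < 1 := by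
      have := mul_lt_mul_of_pos_left hu hDpos
      rwa [mul_inv_cancel₀ hDpos.ne'] at this
    refine Summable.of_nonneg_of_le (fun j => norm_nonneg _) ?_
      (((summable_geometric_of_lt_one (by positivity) hq1).mul_left (C * D * ‖u‖)))
    intro j
    have hnorm : ‖((N (j + 1) : ℂ) / ((j : ℂ) + 1)) * u ^ (j + 1)‖
        = |N (j + 1)| / ((j : ℝ) + 1) * ‖u‖ ^ (j + 1) := by
      rw [norm_mul, norm_div, norm_pow, Complex.norm_real, Real.norm_eq_abs,
        show ((j : ℂ) + 1) = (((j + 1 : ℕ)) : ℂ) by push_cast; ring, Complex.norm_natCast]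
      push_cast
      ring
    rw [hnorm, abs_of_nonneg (hNnonneg (j + 1) (by omega))]
    calc N (j + 1) / ((j : ℝ) + 1) * ‖u‖ ^ (j + 1)
        ≤ N (j + 1) * ‖u‖ ^ (j + 1) := by
          apply mul_le_mul_of_nonneg_right _ (by positivity)
          apply div_le_self (hNnonneg (j + 1) (by omega))
          have : (0 : ℝ) ≤ (j : ℝ) := Nat.cast_nonneg j
          linarith
      _ ≤ C * D * ((D : ℝ) - 1) ^ j * ‖u‖ ^ (j + 1) := by
          apply mul_le_mul_of_nonneg_right _ (by positivity)
          simpa using hbound (j + 1) (by omega)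
      _ = C * D * ‖u‖ * (((D : ℝ) - 1) * ‖u‖) ^ j := by
          rw [mul_pow, pow_succ]; ring
  · -- (b) holomorphy
    intro u hu
    rw [Metric.mem_ball, dist_zero_right] at hu
    set r' : ℝ := (‖u‖ + ((D : ℝ) - 1)⁻¹) / 2 with hr'
    have hur' : ‖u‖ < r' := by rw [hr']; linarith
    have hr'lt : r' < ((D : ℝ) - 1)⁻¹ := by rw [hr']; linarith
    have hr'0 : 0 ≤ r' := le_trans (norm_nonneg u) hur'.le
    have hq1 : ((D : ℝ) - 1) * r' < 1 := by
      have := mul_lt_mul_of_pos_left hr'lt hDpos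
      rwa [mul_inv_cancel₀ hDpos.ne'] at this
    have hsum : Summable (fun j : ℕ => C * D * r' * (((D : ℝ) - 1) * r') ^ j) :=
      (summable_geometric_of_lt_one (by positivity) hq1).mul_left _
    have hdiff : DifferentiableOn ℂ
        (fun w : ℂ => ∑' j : ℕ, ((N (j + 1) : ℂ) / ((j : ℂ) + 1)) * w ^ (j + 1))
        (Metric.ball 0 r') := by
      refine Complex.differentiableOn_tsum_of_summable_norm hsum
        (fun j => ((differentiable_pow (j + 1)).const_mul _).differentiableOn)
        Metric.isOpen_ball ?_
      intro j w hw
      rw [Metric.mem_ball, dist_zero_right] at hw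
      have hnorm : ‖((N (j + 1) : ℂ) / ((j : ℂ) + 1)) * w ^ (j + 1)‖
          = |N (j + 1)| / ((j : ℝ) + 1) * ‖w‖ ^ (j + 1) := by
        rw [norm_mul, norm_div, norm_pow, Complex.norm_real, Real.norm_eq_abs,
          show ((j : ℂ) + 1) = (((j + 1 : ℕ)) : ℂ) by push_cast; ring, Complex.norm_natCast]
        push_cast
        ring
      rw [hnorm, abs_of_nonneg (hNnonneg (j + 1) (by omega))]
      calc N (j + 1) / ((j : ℝ) + 1) * ‖w‖ ^ (j + 1)
          ≤ N (j + 1) * ‖w‖ ^ (j + 1) := by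
            apply mul_le_mul_of_nonneg_right _ (by positivity)
            apply div_le_self (hNnonneg (j + 1) (by omega))
            have : (0 : ℝ) ≤ (j : ℝ) := Nat.cast_nonneg j
            linarith
        _ ≤ C * D * ((D : ℝ) - 1) ^ j * r' ^ (j + 1) := by
            apply mul_le_mul (by simpa using hbound (j + 1) (by omega))
              (pow_le_pow_left₀ (norm_nonneg w) hw.le (j + 1)) (by positivity)
            positivity
        _ = C * D * r' * (((D : ℝ) - 1) * r') ^ j := by
            rw [mul_pow, pow_succ]; ring
    have hdAt : DifferentiableAt ℂ
        (fun w : ℂ => ∑' j : ℕ, ((N (j + 1) : ℂ) / ((j : ℂ) + 1)) * w ^ (j + 1)) u :=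
      hdiff.differentiableAt (Metric.isOpen_ball.mem_nhds (by
        rw [Metric.mem_ball, dist_zero_right]; exact hur'))
    exact (hdAt.cexp).differentiableWithinAt
  · -- (c) Euler product
    intro u hu
    have hu1 : ‖u‖ < 1 := lt_of_lt_of_le hu hr1
    have hq1 : ((D : ℝ) - 1) * ‖u‖ < 1 := by
      have := mul_lt_mul_of_pos_left hu hDpos
      rwa [mul_inv_cancel₀ hDpos.ne'] at this
    obtain ⟨hN, hP⟩ := key_hasSum D hD C hC N P hPnonneg hNP hbound u hu
    refine ⟨?_, ?_, ?_⟩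
    · -- summability of norms of logs
      set K : ℝ := (1 - ‖u‖)⁻¹ / 2 + 1 with hK
      have hK0 : 0 ≤ K := by
        have h01 : 0 ≤ (1 - ‖u‖)⁻¹ := inv_nonneg.2 (by linarith)
        rw [hK]; linarith
      refine Summable.of_nonneg_of_le (fun j => norm_nonneg _) ?_
        (((summable_geometric_of_lt_one (by positivity) hq1).mul_left (C * D * K * ‖u‖)))
      intro j
      set t : ℝ := ‖u‖ ^ (j + 1) with ht
      have ht0 : 0 ≤ t := by positivity
      have ht1 : t ≤ ‖u‖ := by
        rw [ht]
        calc ‖u‖ ^ (j + 1) ≤ ‖u‖ ^ 1 :=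
              pow_le_pow_of_le_one (norm_nonneg u) hu1.le (by omega)
          _ = ‖u‖ := pow_one _
      have htlt : t < 1 := lt_of_le_of_lt ht1 hu1
      have hlogle : ‖Complex.log (1 - u ^ (j + 1))‖ ≤ K * t := by
        have hz : ‖-u ^ (j + 1)‖ < 1 := by
          rw [norm_neg, norm_pow]; exact lt_of_le_of_lt ht1 hu1
        have h := Complex.norm_log_one_add_le hz
        rw [show (1 : ℂ) + -u ^ (j + 1) = 1 - u ^ (j + 1) by ring] at h
        rw [norm_neg, norm_pow] at h
        refine h.trans ?_
        have hinv : (1 - t)⁻¹ ≤ (1 - ‖u‖)⁻¹ := by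
          exact inv_anti₀ (by linarith) (by linarith)
        have hsq : t ^ 2 ≤ t := by nlinarith
        calc t ^ 2 * (1 - t)⁻¹ / 2 + t
            ≤ t * (1 - ‖u‖)⁻¹ / 2 + t := by
              have h1 : t ^ 2 * (1 - t)⁻¹ ≤ t * (1 - ‖u‖)⁻¹ :=
                mul_le_mul hsq hinv (inv_nonneg.2 (by linarith)) ht0
              linarith
          _ = K * t := by rw [hK]; ring
      have hnorm : ‖((P (j + 1) : ℂ) / ((j : ℂ) + 1)) * Complex.log (1 - u ^ (j + 1))‖
          = |P (j + 1)| / ((j : ℝ) + 1) * ‖Complex.log (1 - u ^ (j + 1))‖ := by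
        rw [norm_mul, norm_div, Complex.norm_real, Real.norm_eq_abs,
          show ((j : ℂ) + 1) = (((j + 1 : ℕ)) : ℂ) by push_cast; ring, Complex.norm_natCast]
        push_cast
        ring
      rw [hnorm, abs_of_nonneg (hPnonneg (j + 1) (by omega))]
      calc P (j + 1) / ((j : ℝ) + 1) * ‖Complex.log (1 - u ^ (j + 1))‖
          ≤ P (j + 1) * (K * t) := by
            apply mul_le_mul _ hlogle (norm_nonneg _) (hPnonneg (j + 1) (by omega))
            apply div_le_self (hPnonneg (j + 1) (by omega))
            have : (0 : ℝ) ≤ (j : ℝ) := Nat.cast_nonneg j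
            linarith
        _ ≤ C * D * ((D : ℝ) - 1) ^ j * (K * t) := by
            apply mul_le_mul_of_nonneg_right _ (by positivity)
            simpa using hP_le (j + 1) (by omega)
        _ = C * D * K * ‖u‖ * (((D : ℝ) - 1) * ‖u‖) ^ j := by
            rw [ht, mul_pow, pow_succ]; ring
    · exact hP.cexp.multipliable
    · exact hP.cexp.tprod_eq.symm
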